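/- Let f ⊕ g solve the coupled antilinear system (A − z) f = λ ḡ and (B − z) ḡ = λ f, where B = 𝒞 A* 𝒞 (so that diag(A, B̄ᵀ-type structure) is C-selfadjoint), with λ > 0. Suppose S is a selfadjoint involution (S = S*, S² = I) and there are constants m > 0 and 0 ≤ b < 1 such that Re⟨S f, (A − z) f⟩ ≥ m(1 − b)‖f‖² and Re⟨S ḡ, (B − z) ḡ⟩ ≥ m(1 − b)‖ḡ‖². Then λ ≥ m(1 − b). -/
import Mathlib


open scoped ComplexConjugate

local notation "⟪" x ", " y "⟫" => @inner ℂ _ _ x y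

/-- Lower bound on the antilinear eigenvalue `λ` of the coupled system
`(A - z) f = λ ḡ`, `(B - z) ḡ = λ f` (with `B = 𝒞 A* 𝒞`), given the two quadratic
form lower bounds against a selfadjoint involution `S`. -/
theorem antilinear_eigenvalue_lower_bound {H : Type*} [NormedAddCommGroup H]
    [InnerProductSpace ℂ H] [CompleteSpace H]
    (𝒞 : H → H)
    (hadd : ∀ f g, 𝒞 (f + g) = 𝒞 f + 𝒞 g)
    (hsmul : ∀ (c : ℂ) (f : H), 𝒞 (c • f) = conj c • 𝒞 f)
    (hinv : ∀ f, 𝒞 (𝒞 f) = f)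
    (hinner : ∀ f g, ⟪𝒞 f, 𝒞 g⟫ = ⟪g, f⟫)
    (A B : H →L[ℂ] H)
    (hB : ∀ f, B f = 𝒞 (ContinuousLinearMap.adjoint A (𝒞 f)))
    (S : H →L[ℂ] H)
    (hSsa : ContinuousLinearMap.adjoint S = S)
    (hSinv : S ∘L S = ContinuousLinearMap.id ℂ H)
    (z : ℂ) (f g : H) (hf : f ≠ 0) (hg : g ≠ 0)
    (lam : ℝ) (hlam : 0 < lam)
    (heq1 : A f - z • f = (lam : ℂ) • 𝒞 g)
    (heq2 : B (𝒞 g) - z • 𝒞 g = (lam : ℂ) • f)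
    (m b : ℝ) (hm : 0 < m) (hb0 : 0 ≤ b) (hb1 : b < 1)
    (hlow1 : m * (1 - b) * ‖f‖ ^ 2 ≤ (⟪S f, A f - z • f⟫).re)
    (hlow2 : m * (1 - b) * ‖𝒞 g‖ ^ 2 ≤ (⟪S (𝒞 g), B (𝒞 g) - z • 𝒞 g⟫).re) :
    m * (1 - b) ≤ lam := by
  -- S is an isometry
  have hS : ∀ x : H, ‖S x‖ = ‖x‖ := by
    intro x
    have hSS : S (S x) = x := by
      have := congrArg (fun T : H →L[ℂ] H => T x) hSinv
      simpa using this
    have h1 : ⟪S x, S x⟫ = ⟪x, x⟫ := by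
      rw [← ContinuousLinearMap.adjoint_inner_right S, hSsa, hSS]
    have h2 : (‖S x‖ : ℝ) ^ 2 = ‖x‖ ^ 2 := by
      rw [← @inner_self_eq_norm_sq ℂ, ← @inner_self_eq_norm_sq ℂ]
      exact congrArg RCLike.re h1
    nlinarith [norm_nonneg (S x), norm_nonneg x]
  -- ‖𝒞 g‖ = ‖g‖
  have hCg : ‖𝒞 g‖ = ‖g‖ := by
    have h1 : ⟪𝒞 g, 𝒞 g⟫ = ⟪g, g⟫ := hinner g g
    have h2 : (‖𝒞 g‖ : ℝ) ^ 2 = ‖g‖ ^ 2 := by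
      rw [← @inner_self_eq_norm_sq ℂ, ← @inner_self_eq_norm_sq ℂ]
      exact congrArg RCLike.re h1
    nlinarith [norm_nonneg (𝒞 g), norm_nonneg g]
  set M := m * (1 - b) with hM
  have hMpos : 0 < M := by
    apply mul_pos hm; linarith
  -- bound 1
  have key : ∀ (x y : H), (⟪S x, (lam : ℂ) • y⟫).re ≤ lam * (‖x‖ * ‖y‖) := by
    intro x y
    calc (⟪S x, (lam : ℂ) • y⟫).re ≤ ‖⟪S x, (lam : ℂ) • y⟫‖ := Complex.re_le_norm _
      _ ≤ ‖S x‖ * ‖(lam : ℂ) • y‖ := norm_inner_le_norm _ _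
      _ = lam * (‖x‖ * ‖y‖) := by
          rw [hS, norm_smul]
          simp [Complex.norm_real, abs_of_pos hlam]
          ring
  have h1 : M * ‖f‖ ^ 2 ≤ lam * (‖f‖ * ‖g‖) := by
    calc M * ‖f‖ ^ 2 ≤ (⟪S f, A f - z • f⟫).re := hlow1
      _ = (⟪S f, (lam : ℂ) • 𝒞 g⟫).re := by rw [heq1]
      _ ≤ lam * (‖f‖ * ‖𝒞 g‖) := key f (𝒞 g)
      _ = lam * (‖f‖ * ‖g‖) := by rw [hCg]
  have h2 : M * ‖g‖ ^ 2 ≤ lam * (‖f‖ * ‖g‖) := by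
    calc M * ‖g‖ ^ 2 = M * ‖𝒞 g‖ ^ 2 := by rw [hCg]
      _ ≤ (⟪S (𝒞 g), B (𝒞 g) - z • 𝒞 g⟫).re := hlow2
      _ = (⟪S (𝒞 g), (lam : ℂ) • f⟫).re := by rw [heq2]
      _ ≤ lam * (‖𝒞 g‖ * ‖f‖) := key (𝒞 g) f
      _ = lam * (‖f‖ * ‖g‖) := by rw [hCg]; ring
  have hfpos : 0 < ‖f‖ := norm_pos_iff.mpr hf
  have hgpos : 0 < ‖g‖ := norm_pos_iff.mpr hg
  nlinarith [sq_nonneg (‖f‖ - ‖g‖), sq_nonneg (‖f‖ + ‖g‖), mul_pos hfpos hgpos]
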